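/- Let K_{m,n} = ⟨a, b : a^m = 1, b^{2n} = a^g, b a b⁻¹ = a⁻¹⟩ be a non-abelian metacyclic group of order 2mn. A positive divisor k of 2mn is the order of some normal subgroup of K_{m,n} if and only if m divides k or v₂(k) < v₂(2mn), where v₂ denotes the 2-adic valuation. -/

import Mathlib

set_option maxHeartbeats 1000000
set_option linter.unusedSectionVars false

/-- The relations of the metacyclic presentation
`K_{m,n} = ⟨a, b : a^m = 1, b^(2n) = a^g, b a b⁻¹ = a⁻¹⟩`, with generator `0`
playing the role of `a` and generator `1` playing the role of `b`. -/
def Krels (m n g : ℕ) : Set (FreeGroup (Fin 2)) :=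
  {FreeGroup.of 0 ^ m,
   FreeGroup.of 1 ^ (2 * n) * (FreeGroup.of 0 ^ g)⁻¹,
   FreeGroup.of 1 * FreeGroup.of 0 * (FreeGroup.of 1)⁻¹ * FreeGroup.of 0}

namespace KAux

/-- Concrete model of the metacyclic group, on `ZMod m × ZMod (2n)` with a cocycle. -/
@[ext]
structure KK (m n g : ℕ) : Type where
  x : ZMod m
  y : ZMod (2 * n)

namespace KK

/-- carry cocycle -/
def chi {n : ℕ} (y y' : ZMod (2 * n)) : ℕ := if 2 * n ≤ y.val + y'.val then 1 else 0

/-- sign -/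
def eps (m : ℕ) {n : ℕ} (y : ZMod (2 * n)) : ZMod m := (-1 : ZMod m) ^ y.val

variable {m n g : ℕ}

instance : Mul (KK m n g) :=
  ⟨fun p q => ⟨p.x + eps m p.y * q.x + (g : ZMod m) * (chi p.y q.y : ℕ), p.y + q.y⟩⟩

instance : One (KK m n g) := ⟨⟨0, 0⟩⟩

instance : Inv (KK m n g) :=
  ⟨fun p => ⟨-(eps m (-p.y) * p.x) - (g : ZMod m) * (chi (-p.y) p.y : ℕ), -p.y⟩⟩

lemma mul_def (p q : KK m n g) :
    p * q = ⟨p.x + eps m p.y * q.x + (g : ZMod m) * (chi p.y q.y : ℕ), p.y + q.y⟩ := rfl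

lemma one_def : (1 : KK m n g) = ⟨0, 0⟩ := rfl

lemma inv_def (p : KK m n g) :
    p⁻¹ = ⟨-(eps m (-p.y) * p.x) - (g : ZMod m) * (chi (-p.y) p.y : ℕ), -p.y⟩ := rfl

section Lemmas

variable [NeZero n]

instance : NeZero (2 * n) := ⟨by have := NeZero.ne n; omega⟩

instance : Fact (1 < 2 * n) := ⟨by have := NeZero.ne n; omega⟩

lemma val2 (y : ZMod (2 * n)) : y.val < 2 * n := ZMod.val_lt y

lemma neg_one_pow_mod2 {R : Type*} [Monoid R] [HasDistribNeg R] (a : ℕ) :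
    (-1 : R) ^ a = (-1) ^ (a % 2) := by
  conv_lhs => rw [← Nat.div_add_mod a 2]
  rw [pow_add, pow_mul, neg_one_sq, one_pow, one_mul]

lemma eps_apply (y : ZMod (2 * n)) : eps m y = (-1 : ZMod m) ^ (y.val % 2) :=
  neg_one_pow_mod2 _

lemma eps_pm (y : ZMod (2 * n)) : eps m y = 1 ∨ eps m y = -1 := by
  rw [eps_apply]
  rcases Nat.mod_two_eq_zero_or_one y.val with h | h <;> rw [h] <;> simp

lemma eps_zero : eps m (0 : ZMod (2 * n)) = 1 := by
  rw [eps, ZMod.val_zero, pow_zero]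

lemma eps_add (y y' : ZMod (2 * n)) : eps m (y + y') = eps m y * eps m y' := by
  rw [eps_apply, ZMod.val_add, Nat.mod_mod_of_dvd _ ⟨n, rfl⟩, ← neg_one_pow_mod2,
    pow_add, ← eps, ← eps]

lemma eps_neg (y : ZMod (2 * n)) : eps m (-y) = eps m y := by
  rw [eps_apply, eps_apply, ZMod.neg_val]
  split_ifs with h
  · rw [h, ZMod.val_zero]
  · have h1 := val2 y
    have h2 : y.val ≠ 0 := fun hc => h ((ZMod.val_eq_zero y).mp hc)
    congr 1
    omega

lemma eps_mul_self (y : ZMod (2 * n)) : eps m y * eps m y = 1 := by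
  rcases eps_pm (m := m) y with h | h <;> rw [h] <;> ring

lemma g_neg (hg2 : (g : ZMod m) + g = 0) (c : ZMod m) :
    -((g : ZMod m) * c) = (g : ZMod m) * c := by
  have h : (g : ZMod m) * c + (g : ZMod m) * c = 0 := by
    rw [← add_mul, hg2, zero_mul]
  linear_combination -h

lemma eps_g (hg2 : (g : ZMod m) + g = 0) (y : ZMod (2 * n)) (c : ZMod m) :
    eps m y * ((g : ZMod m) * c) = (g : ZMod m) * c := by
  rcases eps_pm (m := m) y with h | h <;> rw [h]
  · rw [one_mul]
  · rw [neg_one_mul, g_neg hg2]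

lemma g_mul_mod2 (hg2 : (g : ZMod m) + g = 0) (a : ℕ) :
    (g : ZMod m) * (a : ZMod m) = (g : ZMod m) * ((a % 2 : ℕ) : ZMod m) := by
  have ha : a = 2 * (a / 2) + a % 2 := (Nat.div_add_mod a 2).symm
  have : ((a : ℕ) : ZMod m) = 2 * ((a / 2 : ℕ) : ZMod m) + ((a % 2 : ℕ) : ZMod m) := by
    conv_lhs => rw [ha]
    push_cast
    ring
  rw [this]
  have h2g : (g : ZMod m) * 2 = 0 := by
    rw [mul_two, hg2]
  linear_combination ((a / 2 : ℕ) : ZMod m) * h2g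

lemma chi_eq (y y' : ZMod (2 * n)) :
    chi y y' = if 2 * n ≤ y.val + y'.val then 1 else 0 := rfl

lemma val_add' (y y' : ZMod (2 * n)) :
    (y + y').val = if 2 * n ≤ y.val + y'.val then y.val + y'.val - (2 * n)
      else y.val + y'.val := by
  rw [ZMod.val_add]
  have h := val2 y
  have h' := val2 y'
  split_ifs with h2
  · rw [Nat.mod_eq_sub_mod h2, Nat.mod_eq_of_lt (by omega)]
  · exact Nat.mod_eq_of_lt (by omega)

lemma chi_zero_left (y : ZMod (2 * n)) : chi (0 : ZMod (2 * n)) y = 0 := by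
  rw [chi_eq, ZMod.val_zero, if_neg]
  have := val2 y
  omega

lemma chi_zero_right (y : ZMod (2 * n)) : chi y (0 : ZMod (2 * n)) = 0 := by
  rw [chi_eq, ZMod.val_zero, if_neg]
  have := val2 y
  omega

lemma chi_cocycle (y₁ y₂ y₃ : ZMod (2 * n)) :
    chi y₁ y₂ + chi (y₁ + y₂) y₃ = chi y₂ y₃ + chi y₁ (y₂ + y₃) := by
  have h1 := val2 y₁
  have h2 := val2 y₂
  have h3 := val2 y₃
  have e12 := val_add' y₁ y₂
  have e23 := val_add' y₂ y₃
  simp only [chi_eq, e12, e23]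
  split_ifs <;> omega

lemma chi_conj (y y' : ZMod (2 * n)) :
    chi y y' + chi (y + y') (-y) = chi (-y) y := by
  have h1 := val2 y
  have h2 := val2 y'
  by_cases h0 : y = 0
  · subst h0
    simp only [chi_eq, neg_zero, ZMod.val_zero, zero_add, add_zero]
    split_ifs <;> omega
  · have hA : y.val ≠ 0 := fun hc => h0 ((ZMod.val_eq_zero y).mp hc)
    have e12 := val_add' y y'
    have hneg : (-y).val = 2 * n - y.val := by rw [ZMod.neg_val, if_neg h0]
    simp only [chi_eq, e12, hneg]
    split_ifs <;> omega

end Lemmas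

section GroupStr

variable [NeZero n] [Fact ((g : ZMod m) + g = 0)]

instance : Group (KK m n g) := by
  have hg2 : (g : ZMod m) + g = 0 := Fact.out
  refine Group.ofLeftAxioms ?_ ?_ ?_
  · intro p q r
    simp only [mul_def, mk.injEq]
    constructor
    · have hc := chi_cocycle p.y q.y r.y
      have hc' : ((chi p.y q.y : ℕ) : ZMod m) + ((chi (p.y + q.y) r.y : ℕ) : ZMod m)
          = ((chi q.y r.y : ℕ) : ZMod m) + ((chi p.y (q.y + r.y) : ℕ) : ZMod m) := by
        exact_mod_cast congrArg (Nat.cast : ℕ → ZMod m) hc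
      rw [eps_add, mul_add, mul_add, eps_g hg2]
      linear_combination (g : ZMod m) * hc'
    · exact add_assoc _ _ _
  · intro p
    apply KK.ext
    · show 0 + eps m 0 * p.x + (g : ZMod m) * (chi 0 p.y : ℕ) = p.x
      rw [eps_zero, chi_zero_left]
      push_cast
      ring
    · exact zero_add _
  · intro p
    simp only [inv_def, mul_def, one_def, mk.injEq]
    constructor
    · ring
    · exact neg_add_cancel _
end GroupStr

section Elems

variable [NeZero m] [NeZero n] [Fact ((g : ZMod m) + g = 0)]

/-- equivalence with the product type -/
def prodEquiv : KK m n g ≃ ZMod m × ZMod (2 * n) where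
  toFun p := (p.x, p.y)
  invFun p := ⟨p.1, p.2⟩
  left_inv p := rfl
  right_inv p := rfl

instance : Finite (KK m n g) := Finite.of_equiv _ (prodEquiv (m := m) (n := n) (g := g)).symm

lemma card_KK : Nat.card (KK m n g) = 2 * m * n := by
  rw [Nat.card_congr (prodEquiv (m := m) (n := n) (g := g)), Nat.card_prod,
    Nat.card_zmod, Nat.card_zmod]
  ring

/-- the generator a -/
def aK : KK m n g := ⟨1, 0⟩

/-- the generator b -/
def bK : KK m n g := ⟨0, 1⟩

/-- embedding of `ZMod m` as the `a`-axis -/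
def iota : Multiplicative (ZMod m) →* KK m n g where
  toFun u := ⟨Multiplicative.toAdd u, 0⟩
  map_one' := rfl
  map_mul' u v := by
    apply KK.ext
    · show Multiplicative.toAdd (u * v)
        = Multiplicative.toAdd u + eps m 0 * Multiplicative.toAdd v
          + (g : ZMod m) * (chi 0 0 : ℕ)
      rw [eps_zero, chi_zero_left, toAdd_mul]
      push_cast
      ring
    · show (0 : ZMod (2 * n)) = 0 + 0
      rw [zero_add]

lemma iota_injective : Function.Injective (iota (m := m) (n := n) (g := g)) := by
  intro u v h
  have := congrArg KK.x h
  exact Multiplicative.toAdd.injective this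

lemma iota_apply (u : ZMod m) :
    iota (g := g) (n := n) (Multiplicative.ofAdd u) = ⟨u, 0⟩ := rfl

lemma aK_pow (t : ℕ) : (aK : KK m n g) ^ t = ⟨((t : ℕ) : ZMod m), 0⟩ := by
  have : (aK : KK m n g) = iota (Multiplicative.ofAdd 1) := rfl
  rw [this, ← map_pow, ← ofAdd_nsmul, iota_apply, nsmul_eq_mul, mul_one]

lemma aK_zpow (t : ℤ) : (aK : KK m n g) ^ t = ⟨((t : ℤ) : ZMod m), 0⟩ := by
  have : (aK : KK m n g) = iota (Multiplicative.ofAdd 1) := rfl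
  rw [this, ← map_zpow, ← ofAdd_zsmul, iota_apply, zsmul_eq_mul, mul_one]

lemma val_one' : (1 : ZMod (2 * n)).val = 1 := ZMod.val_one _

lemma bK_pow (j : ℕ) (hj : j < 2 * n) :
    (bK : KK m n g) ^ j = ⟨0, ((j : ℕ) : ZMod (2 * n))⟩ := by
  induction j with
  | zero => simp only [pow_zero, Nat.cast_zero]; rfl
  | succ j ih =>
    have hjlt : j < 2 * n := by omega
    rw [pow_succ, ih hjlt]
    apply KK.ext
    · show 0 + eps m ((j : ℕ) : ZMod (2 * n)) * (0 : ZMod m)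
        + (g : ZMod m) * (chi ((j : ℕ) : ZMod (2 * n)) 1 : ℕ) = 0
      have hv : (((j : ℕ) : ZMod (2 * n))).val = j := ZMod.val_cast_of_lt hjlt
      have hchi : chi ((j : ℕ) : ZMod (2 * n)) (1 : ZMod (2 * n)) = 0 := by
        rw [chi_eq, hv, val_one', if_neg (by omega)]
      rw [hchi]
      push_cast
      ring
    · show ((j : ℕ) : ZMod (2 * n)) + 1 = ((j + 1 : ℕ) : ZMod (2 * n))
      push_cast
      ring

lemma bK_pow_2n : (bK : KK m n g) ^ (2 * n) = ⟨((g : ℕ) : ZMod m), 0⟩ := by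
  have h2n : 2 * n = (2 * n - 1) + 1 := by have := NeZero.ne n; omega
  have hlt : 2 * n - 1 < 2 * n := by omega
  have e1 := congrArg (fun t => (bK : KK m n g) ^ t) h2n
  rw [e1, pow_succ, bK_pow _ hlt]
  apply KK.ext
  · show 0 + eps m (((2 * n - 1 : ℕ) : ZMod (2 * n))) * (0 : ZMod m)
      + (g : ZMod m) * (chi ((2 * n - 1 : ℕ) : ZMod (2 * n)) 1 : ℕ) = ((g : ℕ) : ZMod m)
    have hv : (((2 * n - 1 : ℕ) : ZMod (2 * n))).val = 2 * n - 1 := ZMod.val_cast_of_lt hlt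
    have hchi : chi ((2 * n - 1 : ℕ) : ZMod (2 * n)) (1 : ZMod (2 * n)) = 1 := by
      rw [chi_eq, hv, val_one', if_pos (by omega)]
    rw [hchi]
    push_cast
    ring
  · show ((2 * n - 1 : ℕ) : ZMod (2 * n)) + 1 = 0
    have h1 : ((2 * n - 1 : ℕ) : ZMod (2 * n)) + 1 = ((2 * n - 1 + 1 : ℕ) : ZMod (2 * n)) := by
      push_cast
      ring
    rw [h1, show 2 * n - 1 + 1 = 2 * n by omega, ZMod.natCast_self]

lemma eps_smul_mem {X : AddSubgroup (ZMod m)} {v : ZMod m} (hv : v ∈ X) (y : ZMod (2 * n)) :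
    eps m y * v ∈ X := by
  rcases eps_pm (m := m) y with h | h <;> rw [h]
  · rwa [one_mul]
  · rw [neg_one_mul]; exact neg_mem hv

lemma g_nat_mem {X : AddSubgroup (ZMod m)} (hgX : (g : ZMod m) ∈ X) (a : ℕ) :
    (g : ZMod m) * ((a : ℕ) : ZMod m) ∈ X := by
  rw [mul_comm, ← nsmul_eq_mul]
  exact AddSubgroup.nsmul_mem X hgX a

end Elems

/-- the twist function -/
def theta (m g q : ℕ) {n : ℕ} (y : ZMod (2 * n)) : ZMod m :=
  (g : ZMod m) * (((y.val / q) % 2 : ℕ) : ZMod m)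

section NNsec

variable [NeZero m] [NeZero n] [Fact ((g : ZMod m) + g = 0)]

lemma theta_zero (q : ℕ) : theta m g q (0 : ZMod (2 * n)) = 0 := by
  rw [theta, ZMod.val_zero, Nat.zero_div, Nat.zero_mod, Nat.cast_zero, mul_zero]

lemma theta_eq {q : ℕ} (hq0 : 0 < q) {y : ZMod (2 * n)} {s : ℕ} (hs : y.val = q * s) :
    theta m g q y = (g : ZMod m) * ((s % 2 : ℕ) : ZMod m) := by
  rw [theta, hs, Nat.mul_div_cancel_left _ hq0]

/-- The family of normal subgroups of `KK`. -/
def NN (X : AddSubgroup (ZMod m)) (q e : ℕ) (hq : q * e = 2 * n)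
    (hX : (g : ZMod m) ∈ X ∨ Odd e) : Subgroup (KK m n g) where
  carrier := {p : KK m n g | q ∣ p.y.val ∧ p.x - theta m g q p.y ∈ X}
  one_mem' := by
    constructor
    · show q ∣ (0 : ZMod (2 * n)).val
      rw [ZMod.val_zero]; exact dvd_zero q
    · show (0 : ZMod m) - theta m g q (0 : ZMod (2 * n)) ∈ X
      rw [theta_zero, sub_zero]; exact zero_mem X
  mul_mem' := by
    intro p p' hp hp'
    have hg2 : (g : ZMod m) + g = 0 := Fact.out
    obtain ⟨hy, hx⟩ := hp
    obtain ⟨hy', hx'⟩ := hp'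
    have hn0 := NeZero.ne n
    have hq0 : 0 < q := Nat.pos_of_ne_zero (fun h => by rw [h, zero_mul] at hq; omega)
    have he0 : 0 < e := Nat.pos_of_ne_zero (fun h => by rw [h, mul_zero] at hq; omega)
    obtain ⟨s, hs⟩ := hy
    obtain ⟨s', hs'⟩ := hy'
    have hA := val2 p.y
    have hB := val2 p'.y
    have hslt : s < e := by
      have h1 : q * s < q * e := by rw [hq]; omega
      exact lt_of_mul_lt_mul_left h1 (Nat.zero_le q)
    have hs'lt : s' < e := by
      have h1 : q * s' < q * e := by rw [hq]; omega
      exact lt_of_mul_lt_mul_left h1 (Nat.zero_le q)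
    have hvadd := val_add' p.y p'.y
    have hcond : (2 * n ≤ p.y.val + p'.y.val) ↔ e ≤ s + s' := by
      rw [hs, hs', ← Nat.mul_add, ← hq]
      constructor
      · intro h; exact Nat.le_of_mul_le_mul_left h hq0
      · intro h; exact Nat.mul_le_mul_left q h
    have hdistr : q * (s + s' - e) = q * s + q * s' - q * e := by
      rw [Nat.mul_sub, Nat.mul_add]
    set s'' : ℕ := if e ≤ s + s' then s + s' - e else s + s' with hs''def
    have hvs : (p.y + p'.y).val = q * s'' := by
      by_cases hcc : e ≤ s + s'
      · rw [hvadd, if_pos (hcond.mpr hcc), hs''def, if_pos hcc, hs, hs', hdistr, hq]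
      · rw [hvadd, if_neg (fun hcl => hcc (hcond.mp hcl)), hs''def, if_neg hcc, hs, hs',
          Nat.mul_add]
    refine ⟨⟨s'', hvs⟩, ?_⟩
    have hth : theta m g q (p.y + p'.y) = (g : ZMod m) * ((s'' % 2 : ℕ) : ZMod m) :=
      theta_eq hq0 hvs
    have hth1 : theta m g q p.y = (g : ZMod m) * ((s % 2 : ℕ) : ZMod m) := theta_eq hq0 hs
    have hth2 : theta m g q p'.y = (g : ZMod m) * ((s' % 2 : ℕ) : ZMod m) := theta_eq hq0 hs'
    show p.x + eps m p.y * p'.x + (g : ZMod m) * (chi p.y p'.y : ℕ)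
      - theta m g q (p.y + p'.y) ∈ X
    rcases hX with hgX | hodd
    · have hθX : theta m g q p.y ∈ X := by rw [hth1]; exact g_nat_mem hgX _
      have hθX' : theta m g q p'.y ∈ X := by rw [hth2]; exact g_nat_mem hgX _
      have hpx : p.x ∈ X := by simpa using X.add_mem hx hθX
      have hp'x : p'.x ∈ X := by simpa using X.add_mem hx' hθX'
      refine sub_mem (add_mem (add_mem hpx (eps_smul_mem hp'x _)) (g_nat_mem hgX _)) ?_
      rw [hth]; exact g_nat_mem hgX _
    · obtain ⟨c, hc⟩ := hodd
      set χ : ℕ := if 2 * n ≤ p.y.val + p'.y.val then 1 else 0 with hχ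
      have hchi' : (chi p.y p'.y : ℕ) = χ := chi_eq _ _
      have hpar : (χ + s % 2 + s' % 2) % 2 = s'' % 2 := by
        by_cases hcc : e ≤ s + s'
        · rw [hχ, if_pos (hcond.mpr hcc), hs''def, if_pos hcc]; omega
        · rw [hχ, if_neg (fun hcl => hcc (hcond.mp hcl)), hs''def, if_neg hcc]; omega
      have H : (g : ZMod m) * ((χ + s % 2 + s' % 2 : ℕ) : ZMod m)
          = (g : ZMod m) * ((s'' % 2 : ℕ) : ZMod m) := by
        rw [g_mul_mod2 hg2, hpar, ← g_mul_mod2 hg2]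
      have key : p.x + eps m p.y * p'.x + (g : ZMod m) * (chi p.y p'.y : ℕ)
          - theta m g q (p.y + p'.y)
          = (p.x - theta m g q p.y) + eps m p.y * (p'.x - theta m g q p'.y) := by
        rw [hth, hth1, hth2, hchi']
        rcases eps_pm (m := m) p.y with h | h <;> rw [h]
        · push_cast at H ⊢
          linear_combination H
        · push_cast at H ⊢
          linear_combination H - ((s' % 2 : ℕ) : ZMod m) * hg2
      rw [key]
      exact add_mem hx (eps_smul_mem hx' _)
  inv_mem' := by
    intro p hp
    have hg2 : (g : ZMod m) + g = 0 := Fact.out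
    obtain ⟨hy, hx⟩ := hp
    have hn0 := NeZero.ne n
    have hq0 : 0 < q := Nat.pos_of_ne_zero (fun h => by rw [h, zero_mul] at hq; omega)
    have he0 : 0 < e := Nat.pos_of_ne_zero (fun h => by rw [h, mul_zero] at hq; omega)
    obtain ⟨s, hs⟩ := hy
    have hA := val2 p.y
    have hslt : s < e := by
      have h1 : q * s < q * e := by rw [hq]; omega
      exact lt_of_mul_lt_mul_left h1 (Nat.zero_le q)
    by_cases h0 : p.y = 0
    · have hxX : p.x ∈ X := by
        have hth0 : theta m g q p.y = 0 := by rw [h0, theta_zero]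
        rwa [hth0, sub_zero] at hx
      refine ⟨?_, ?_⟩
      · show q ∣ (-p.y).val
        rw [h0, neg_zero, ZMod.val_zero]; exact dvd_zero q
      · show -(eps m (-p.y) * p.x) - (g : ZMod m) * (chi (-p.y) p.y : ℕ)
          - theta m g q (-p.y) ∈ X
        rw [h0, neg_zero, eps_zero, chi_zero_left, theta_zero]
        have heq : -((1 : ZMod m) * p.x) - (g : ZMod m) * ((0 : ℕ) : ZMod m) - 0 = -p.x := by
          push_cast; ring
        rw [heq]
        exact neg_mem hxX
    · have hvneg : (-p.y).val = 2 * n - p.y.val := by rw [ZMod.neg_val, if_neg h0]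
      have hs1 : 1 ≤ s := by
        have hne : p.y.val ≠ 0 := fun hcon => h0 ((ZMod.val_eq_zero p.y).mp hcon)
        rcases Nat.eq_zero_or_pos s with h | h
        · exfalso; rw [h, mul_zero] at hs; exact hne hs
        · exact h
      have hsub : q * (e - s) = 2 * n - q * s := by rw [Nat.mul_sub, hq]
      have hvneg' : (-p.y).val = q * (e - s) := by rw [hvneg, hs, hsub]
      refine ⟨⟨e - s, hvneg'⟩, ?_⟩
      have hthneg : theta m g q (-p.y) = (g : ZMod m) * (((e - s) % 2 : ℕ) : ZMod m) :=
        theta_eq hq0 hvneg'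
      have hth1 : theta m g q p.y = (g : ZMod m) * ((s % 2 : ℕ) : ZMod m) := theta_eq hq0 hs
      have hchi1 : chi (-p.y) p.y = 1 := by
        rw [chi_eq, hvneg, if_pos (by omega)]
      show -(eps m (-p.y) * p.x) - (g : ZMod m) * (chi (-p.y) p.y : ℕ)
        - theta m g q (-p.y) ∈ X
      rw [hchi1, hthneg, eps_neg]
      rcases hX with hgX | hodd
      · have hθX : theta m g q p.y ∈ X := by rw [hth1]; exact g_nat_mem hgX _
        have hpx : p.x ∈ X := by simpa using X.add_mem hx hθX
        refine sub_mem (sub_mem (neg_mem (eps_smul_mem hpx _)) (g_nat_mem hgX _)) (g_nat_mem hgX _)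
      · obtain ⟨c, hc⟩ := hodd
        have hpar : (1 + (e - s) % 2 + s % 2) % 2 = 0 := by omega
        have H : (g : ZMod m) * ((1 + (e - s) % 2 + s % 2 : ℕ) : ZMod m) = 0 := by
          rw [g_mul_mod2 hg2, hpar, Nat.cast_zero, mul_zero]
        have key : -(eps m p.y * p.x) - (g : ZMod m) * ((1 : ℕ) : ZMod m)
            - (g : ZMod m) * (((e - s) % 2 : ℕ) : ZMod m)
            = -(eps m p.y * (p.x - theta m g q p.y)) := by
          rw [hth1]
          rcases eps_pm (m := m) p.y with h | h <;> rw [h]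
          · push_cast at H ⊢
            linear_combination -H
          · push_cast at H ⊢
            linear_combination -H + ((s % 2 : ℕ) : ZMod m) * hg2
        rw [key]
        exact neg_mem (eps_smul_mem hx _)

lemma mem_NN {X : AddSubgroup (ZMod m)} {q e : ℕ} {hq : q * e = 2 * n}
    {hX : (g : ZMod m) ∈ X ∨ Odd e} {p : KK m n g} :
    p ∈ NN X q e hq hX ↔ q ∣ p.y.val ∧ p.x - theta m g q p.y ∈ X := Iff.rfl

lemma NN_normal (X : AddSubgroup (ZMod m)) (q e : ℕ) (hq : q * e = 2 * n)
    (hX : (g : ZMod m) ∈ X ∨ Odd e) (hnor : Even q ∨ X = ⊤) :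
    (NN X q e hq hX).Normal := by
  constructor
  intro p hp r
  have hg2 : (g : ZMod m) + g = 0 := Fact.out
  obtain ⟨hy, hx⟩ := hp
  have hsecond : (r * p * r⁻¹).y = p.y := by
    show r.y + p.y + -r.y = p.y
    ring
  rcases hnor with hEvq | hTop
  swap
  · refine ⟨?_, ?_⟩
    · rw [hsecond]; exact hy
    · rw [hTop]; trivial
  · have hn0 := NeZero.ne n
    have hq0 : 0 < q := Nat.pos_of_ne_zero (fun h => by rw [h, zero_mul] at hq; omega)
    obtain ⟨s, hs⟩ := hy
    have hyeven : p.y.val % 2 = 0 := by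
      obtain ⟨u, hu⟩ := hEvq
      have h2 : p.y.val = 2 * (u * s) := by rw [hs, hu]; ring
      omega
    have hEps : eps m p.y = 1 := by
      rw [eps_apply, hyeven, pow_zero]
    have hx3 : (r * p * r⁻¹).x
        = r.x + eps m r.y * p.x + (g : ZMod m) * (chi r.y p.y : ℕ)
          + eps m (r.y + p.y) * (-(eps m (-r.y) * r.x) - (g : ZMod m) * (chi (-r.y) r.y : ℕ))
          + (g : ZMod m) * (chi (r.y + p.y) (-r.y) : ℕ) := rfl
    have hcc : ((chi r.y p.y : ℕ) : ZMod m) + ((chi (r.y + p.y) (-r.y) : ℕ) : ZMod m)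
        = ((chi (-r.y) r.y : ℕ) : ZMod m) := by
      exact_mod_cast congrArg (Nat.cast : ℕ → ZMod m) (chi_conj r.y p.y)
    have key : (r * p * r⁻¹).x - theta m g q p.y
        = eps m r.y * (p.x - theta m g q p.y) := by
      rw [hx3, eps_add, eps_neg, hEps, mul_one, theta]
      rcases eps_pm (m := m) r.y with h | h <;> rw [h]
      · linear_combination (g : ZMod m) * hcc
      · linear_combination (g : ZMod m) * hcc
          + (((chi (-r.y) r.y : ℕ) : ZMod m) - (((p.y.val / q) % 2 : ℕ) : ZMod m)) * hg2
    refine ⟨?_, ?_⟩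
    · rw [hsecond]; exact ⟨s, hs⟩
    · show (r * p * r⁻¹).x - theta m g q (r * p * r⁻¹).y ∈ X
      rw [hsecond, key]
      exact eps_smul_mem hx _

lemma card_NN (X : AddSubgroup (ZMod m)) (q e : ℕ) (hq : q * e = 2 * n)
    (hX : (g : ZMod m) ∈ X ∨ Odd e) :
    Nat.card (NN X q e hq hX) = Nat.card X * e := by
  have hn0 := NeZero.ne n
  have hq0 : 0 < q := Nat.pos_of_ne_zero (fun h => by rw [h, zero_mul] at hq; omega)
  have he0 : 0 < e := Nat.pos_of_ne_zero (fun h => by rw [h, mul_zero] at hq; omega)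
  have hcastval : ∀ s : Fin e, (((q * (s : ℕ) : ℕ) : ZMod (2 * n))).val = q * (s : ℕ) := by
    intro s
    apply ZMod.val_cast_of_lt
    calc q * (s : ℕ) < q * e := (Nat.mul_lt_mul_left hq0).mpr s.2
    _ = 2 * n := hq
  have equiv : (NN X q e hq hX) ≃ X × Fin e := {
    toFun := fun p => (⟨p.1.x - theta m g q p.1.y, p.2.2⟩,
      ⟨p.1.y.val / q, by
        have h2 : p.1.y.val < q * e := by rw [hq]; exact val2 _
        exact Nat.div_lt_of_lt_mul h2⟩)
    invFun := fun us => ⟨⟨us.1.1 + theta m g q (((q * (us.2 : ℕ) : ℕ) : ZMod (2 * n))),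
        ((q * (us.2 : ℕ) : ℕ) : ZMod (2 * n))⟩, by
      refine ⟨⟨(us.2 : ℕ), hcastval us.2⟩, ?_⟩
      show us.1.1 + theta m g q _ - theta m g q _ ∈ X
      rw [add_sub_cancel_right]
      exact us.1.2⟩
    left_inv := fun p => by
      have hy2 : (((q * (p.1.y.val / q) : ℕ) : ZMod (2 * n))) = p.1.y := by
        rw [Nat.mul_div_cancel' p.2.1]
        exact ZMod.natCast_rightInverse p.1.y
      apply Subtype.ext
      apply KK.ext
      · show (p.1.x - theta m g q p.1.y) + theta m g q (((q * (p.1.y.val / q) : ℕ) : ZMod (2 * n)))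
          = p.1.x
        rw [hy2, sub_add_cancel]
      · exact hy2
    right_inv := fun us => by
      have hv := hcastval us.2
      refine Prod.ext (Subtype.ext ?_) (Fin.ext ?_)
      · show us.1.1 + theta m g q _ - theta m g q _ = us.1.1
        rw [add_sub_cancel_right]
      · show (((q * (us.2 : ℕ) : ℕ) : ZMod (2 * n))).val / q = (us.2 : ℕ)
        rw [hv, Nat.mul_div_cancel_left _ hq0] }
  rw [Nat.card_congr equiv, Nat.card_prod]
  congr 1
  simp [Nat.card_eq_fintype_card]

lemma card_zmult (d : ℕ) (hd : d ∣ m) :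
    Nat.card (AddSubgroup.zmultiples (((m / d : ℕ)) : ZMod m)) = d := by
  rw [Nat.card_zmultiples, ZMod.addOrderOf_coe _ (NeZero.ne m),
    Nat.gcd_eq_right (Nat.div_dvd_of_dvd hd), Nat.div_div_self hd (NeZero.ne m)]

lemma mem_zmult_of_dvd {r t : ℕ} (hrt : r ∣ t) :
    ((t : ℕ) : ZMod m) ∈ AddSubgroup.zmultiples ((r : ℕ) : ZMod m) := by
  obtain ⟨c, rfl⟩ := hrt
  refine AddSubgroup.mem_zmultiples_iff.mpr ⟨(c : ℤ), ?_⟩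
  rw [zsmul_eq_mul]
  push_cast
  ring

/-- the parity homomorphism -/
def par : KK m n g →* Multiplicative (ZMod 2) where
  toFun p := Multiplicative.ofAdd ((p.y.val : ZMod 2))
  map_one' := by
    show Multiplicative.ofAdd (((0 : ZMod (2 * n)).val : ZMod 2)) = 1
    rw [ZMod.val_zero, Nat.cast_zero, ofAdd_zero]
  map_mul' p q := by
    show Multiplicative.ofAdd (((p.y + q.y).val : ZMod 2))
      = Multiplicative.ofAdd ((p.y.val : ZMod 2)) * Multiplicative.ofAdd ((q.y.val : ZMod 2))
    rw [← ofAdd_add]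
    congr 1
    rw [ZMod.val_add]
    have h1 : ((p.y.val + q.y.val) % (2 * n)) % 2 = (p.y.val + q.y.val) % 2 :=
      Nat.mod_mod_of_dvd _ ⟨n, rfl⟩
    calc (((p.y.val + q.y.val) % (2 * n) : ℕ) : ZMod 2)
        = ((p.y.val + q.y.val : ℕ) : ZMod 2) := (ZMod.natCast_eq_natCast_iff _ _ _).mpr h1
      _ = _ := by push_cast; ring

lemma par_apply (p : KK m n g) : par p = Multiplicative.ofAdd ((p.y.val : ZMod 2)) := rfl

lemma t2_mem {N : Subgroup (KK m n g)} (hN : N.Normal) {p0 : KK m n g}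
    (hp0 : p0 ∈ N) (hodd : ¬ 2 ∣ p0.y.val) :
    (⟨((2 : ℕ) : ZMod m), 0⟩ : KK m n g) ∈ N := by
  have heps : eps m p0.y = -1 := by
    rw [eps_apply, show p0.y.val % 2 = 1 by omega, pow_one]
  have haKinv : (aK : KK m n g)⁻¹ = ⟨-1, 0⟩ := by
    rw [aK, inv_def]
    apply KK.ext
    · show -(eps m (-(0 : ZMod (2 * n))) * 1) - (g : ZMod m) * (chi (-(0 : ZMod (2*n))) 0 : ℕ) = -1
      rw [neg_zero, eps_zero, chi_zero_left]
      push_cast; ring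
    · show -(0 : ZMod (2 * n)) = 0
      rw [neg_zero]
  have hconj : aK * p0 * aK⁻¹ = (⟨((2 : ℕ) : ZMod m), 0⟩ : KK m n g) * p0 := by
    rw [haKinv]
    simp only [aK, mul_def]
    apply KK.ext
    · simp only [eps_zero, chi_zero_left, zero_add, add_zero, chi_zero_right, heps]
      push_cast; ring
    · simp only [zero_add, add_zero]
  have h1 := hN.conj_mem p0 hp0 aK
  rw [hconj] at h1
  have h2 := N.mul_mem h1 (N.inv_mem hp0)
  rwa [mul_inv_cancel_right] at h2

lemma orderOf_t2 : orderOf ((⟨((2 : ℕ) : ZMod m), 0⟩ : KK m n g)) = m / Nat.gcd m 2 := by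
  have h : (⟨((2 : ℕ) : ZMod m), 0⟩ : KK m n g) = iota (Multiplicative.ofAdd ((2 : ℕ) : ZMod m)) := rfl
  calc orderOf ((⟨((2 : ℕ) : ZMod m), 0⟩ : KK m n g))
      = orderOf (Multiplicative.ofAdd ((2 : ℕ) : ZMod m)) := by
        rw [h]; exact orderOf_injective (iota (m := m) (n := n) (g := g)) iota_injective _
    _ = addOrderOf ((2 : ℕ) : ZMod m) := orderOf_ofAdd_eq_addOrderOf _
    _ = m / Nat.gcd m 2 := ZMod.addOrderOf_coe _ (NeZero.ne m)

theorem classify (k : ℕ) (hkpos : 0 < k) (hk : k ∣ 2 * m * n) (hgm : g = 0 ∨ 2 * g = m) :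
    (∃ N : Subgroup (KK m n g), N.Normal ∧ Nat.card N = k) ↔
      m ∣ k ∨ padicValNat 2 k < padicValNat 2 (2 * m * n) := by
  have hm0 := NeZero.ne m
  have hn0 := NeZero.ne n
  have hmn0 : m * n ≠ 0 := by positivity
  have hval : padicValNat 2 (2 * m * n) = 1 + (padicValNat 2 m + padicValNat 2 n) := by
    rw [show 2 * m * n = 2 * (m * n) by ring, padicValNat.mul (by norm_num) hmn0,
      padicValNat.self (by norm_num), padicValNat.mul hm0 hn0]
  constructor
  · rintro ⟨N, hN, hcard⟩
    by_cases hNA : ∀ p ∈ N, 2 ∣ p.y.val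
    · right
      have hAAnorm : (2 : ℕ) * n = 2 * n := rfl
      have hNle : N ≤ NN (g := g) (⊤ : AddSubgroup (ZMod m)) 2 n rfl (Or.inl trivial) :=
        fun p hp => ⟨hNA p hp, trivial⟩
      have hcAA : Nat.card (NN (g := g) (⊤ : AddSubgroup (ZMod m)) 2 n rfl (Or.inl trivial)) = m * n := by
        rw [card_NN]
        congr 1
        rw [AddSubgroup.card_top, Nat.card_zmod]
      have hdvd : k ∣ m * n := by
        rw [← hcard, ← hcAA]
        exact Subgroup.card_dvd_of_le hNle
      obtain ⟨t, ht⟩ := hdvd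
      have ht0 : t ≠ 0 := by
        rintro rfl
        rw [mul_zero] at ht
        omega
      have hk0 : k ≠ 0 := by omega
      have h3 : padicValNat 2 (m * n) = padicValNat 2 k + padicValNat 2 t := by
        rw [ht, padicValNat.mul hk0 ht0]
      have h4 : padicValNat 2 m + padicValNat 2 n = padicValNat 2 k + padicValNat 2 t := by
        rw [← padicValNat.mul hm0 hn0, h3]
      rw [hval]
      omega
    · left
      push_neg at hNA
      obtain ⟨p0, hp0N, hp0odd⟩ := hNA
      have ht2 : (⟨((2 : ℕ) : ZMod m), 0⟩ : KK m n g) ∈ N := t2_mem hN hp0N hp0odd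
      have hWle : Subgroup.zpowers (⟨((2 : ℕ) : ZMod m), 0⟩ : KK m n g) ≤ N :=
        Subgroup.zpowers_le.mpr ht2
      have hWcard : Nat.card (Subgroup.zpowers (⟨((2 : ℕ) : ZMod m), 0⟩ : KK m n g))
          = m / Nat.gcd m 2 := by rw [Nat.card_zpowers, orderOf_t2]
      rcases Nat.even_or_odd m with hme | hmo
      swap
      · have hcop : Nat.Coprime 2 m := (Nat.prime_two.coprime_iff_not_dvd).mpr
          (by have := Nat.odd_iff.mp hmo; omega)
        have hg1 : Nat.gcd m 2 = 1 := by rw [Nat.gcd_comm]; exact hcop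
        have hdd := Subgroup.card_dvd_of_le hWle
        rw [hWcard, hg1, Nat.div_one, hcard] at hdd
        exact hdd
      · obtain ⟨mhalf, hmh⟩ := hme
        have h2m : 2 ∣ m := ⟨mhalf, by omega⟩
        have hg2' : Nat.gcd m 2 = 2 := by rw [Nat.gcd_comm]; exact Nat.gcd_eq_left h2m
        set φ := (par (m := m) (n := n) (g := g)).comp N.subtype with hφ
        have hφ_apply : ∀ x : N, φ x = Multiplicative.ofAdd (((x : KK m n g).y.val : ZMod 2)) :=
          fun x => rfl
        have hsurj : Function.Surjective φ := by
          intro c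
          have hcases : ∀ x : ZMod 2, x = 0 ∨ x = 1 := by decide
          rcases hcases (Multiplicative.toAdd c) with h | h
          · refine ⟨1, ?_⟩
            rw [map_one, ← ofAdd_toAdd c, h, ofAdd_zero]
          · refine ⟨⟨p0, hp0N⟩, ?_⟩
            rw [hφ_apply, ← ofAdd_toAdd c, h]
            congr 1
            have h1 : p0.y.val % 2 = 1 := by omega
            calc ((p0.y.val : ℕ) : ZMod 2) = ((p0.y.val % 2 : ℕ) : ZMod 2) :=
              (ZMod.natCast_mod _ _).symm
            _ = 1 := by rw [h1, Nat.cast_one]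
        have hqe : Nat.card (N ⧸ MonoidHom.ker φ) = 2 := by
          have e2 : (N ⧸ MonoidHom.ker φ) ≃ Multiplicative (ZMod 2) :=
            (QuotientGroup.quotientKerEquivOfSurjective φ hsurj).toEquiv
          have e3 : Multiplicative (ZMod 2) ≃ ZMod 2 := Multiplicative.toAdd
          rw [Nat.card_congr (e2.trans e3), Nat.card_zmod]
        have hWker : (Subgroup.zpowers (⟨((2 : ℕ) : ZMod m), 0⟩ : KK m n g)).subgroupOf N
            ≤ MonoidHom.ker φ := by
          intro x hx
          rw [Subgroup.mem_subgroupOf] at hx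
          obtain ⟨j, hj⟩ := hx
          have hj' : (⟨((2 : ℕ) : ZMod m), 0⟩ : KK m n g) ^ j = (x : KK m n g) := hj
          have hy : ((x : KK m n g)).y = 0 := by
            rw [← hj']
            have hpow : (⟨((2 : ℕ) : ZMod m), 0⟩ : KK m n g) ^ j
                = iota ((Multiplicative.ofAdd ((2 : ℕ) : ZMod m)) ^ j) := by
              rw [map_zpow]
              rfl
            rw [hpow]
            rfl
          rw [MonoidHom.mem_ker, hφ_apply, hy, ZMod.val_zero, Nat.cast_zero, ofAdd_zero]
        have hWN : Nat.card ((Subgroup.zpowers (⟨((2 : ℕ) : ZMod m), 0⟩ : KK m n g)).subgroupOf N)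
            = m / 2 := by
          rw [Nat.card_congr (Subgroup.subgroupOfEquivOfLe hWle).toEquiv, hWcard, hg2']
        have hdvd2 : (m / 2) ∣ Nat.card (MonoidHom.ker φ) := by
          rw [← hWN]
          exact Subgroup.card_dvd_of_le hWker
        have htot := Subgroup.card_eq_card_quotient_mul_card_subgroup (MonoidHom.ker φ)
        obtain ⟨t, ht⟩ := hdvd2
        rw [hqe, ht] at htot
        have hm2 : m / 2 = mhalf := by omega
        rw [hm2] at htot
        refine ⟨t, ?_⟩
        rw [← hcard, htot, hmh]
        ring
  · rintro (hmk | hv)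
    · obtain ⟨eN, heN⟩ := hmk
      have heDvd : eN ∣ 2 * n := by
        have h1 : m * eN ∣ m * (2 * n) := by
          rw [← heN, show m * (2 * n) = 2 * m * n by ring]
          exact hk
        exact (Nat.mul_dvd_mul_iff_left (Nat.pos_of_ne_zero hm0)).mp h1
      have hq : (2 * n) / eN * eN = 2 * n := Nat.div_mul_cancel heDvd
      refine ⟨NN ⊤ ((2 * n) / eN) eN hq (Or.inl trivial),
        NN_normal _ _ _ _ _ (Or.inr rfl), ?_⟩
      rw [card_NN, AddSubgroup.card_top, Nat.card_zmod, ← heN]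
    · have hk0 : k ≠ 0 := by omega
      have hk2 : padicValNat 2 k ≤ padicValNat 2 m + padicValNat 2 n := by
        rw [hval] at hv
        omega
      set d := Nat.gcd m k with hd
      have hdm : d ∣ m := Nat.gcd_dvd_left m k
      have hdk : d ∣ k := Nat.gcd_dvd_right m k
      have hd0 : d ≠ 0 := by
        have := Nat.gcd_pos_of_pos_left k (Nat.pos_of_ne_zero hm0)
        omega
      set e := k / d with he
      have hde : d * e = k := Nat.mul_div_cancel' hdk
      have he0 : e ≠ 0 := by
        rintro h
        rw [h, mul_zero] at hde
        omega
      have hfack : ∀ p : ℕ, k.factorization p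
          ≤ (2 : ℕ).factorization p + m.factorization p + n.factorization p := by
        intro p
        have h1 : k.factorization ≤ (2 * m * n).factorization :=
          (Nat.factorization_le_iff_dvd hk0 (by positivity)).mpr hk
        have h2 := h1 p
        rwa [Nat.factorization_mul (by positivity) hn0,
          Nat.factorization_mul (by norm_num) hm0, Finsupp.add_apply, Finsupp.add_apply] at h2
      have hdp : ∀ p : ℕ, d.factorization p = min (m.factorization p) (k.factorization p) := by
        intro p
        rw [hd, Nat.factorization_gcd hm0 hk0]
        rfl
      have hep : ∀ p : ℕ, e.factorization p = k.factorization p - d.factorization p := by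
        intro p
        rw [he, Nat.factorization_div hdk, Finsupp.tsub_apply]
      have hen : e ∣ n := by
        rw [← Nat.factorization_le_iff_dvd he0 hn0]
        intro p
        by_cases hp : p.Prime
        swap
        · rw [Nat.factorization_eq_zero_of_not_prime _ hp]
          exact Nat.zero_le _
        · have h1 := hfack p
          have h2 := hdp p
          have h3 := hep p
          by_cases hp2 : p = 2
          · subst hp2
            have hv2 : k.factorization 2 ≤ m.factorization 2 + n.factorization 2 := by
              rw [Nat.factorization_def _ Nat.prime_two, Nat.factorization_def _ Nat.prime_two,
                Nat.factorization_def _ Nat.prime_two]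
              exact hk2
            omega
          · have h2p : (2 : ℕ).factorization p = 0 := by
              rw [Nat.Prime.factorization Nat.prime_two, Finsupp.single_apply,
                if_neg (fun h => hp2 h.symm)]
            omega
      have hq : (2 * n) / e * e = 2 * n := Nat.div_mul_cancel (Dvd.dvd.mul_left hen 2)
      have hXcard : Nat.card (AddSubgroup.zmultiples (((m / d : ℕ)) : ZMod m)) = d :=
        card_zmult d hdm
      have hgood : (g : ZMod m) ∈ AddSubgroup.zmultiples (((m / d : ℕ)) : ZMod m) ∨ Odd e := by
        rcases Nat.even_or_odd e with hee | hoe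
        · left
          rcases hgm with hg0 | hg2m
          · rw [hg0, Nat.cast_zero]
            exact zero_mem _
          · have hmd0 : m / d ≠ 0 := by
              have := Nat.div_dvd_of_dvd hdm
              have hpos := Nat.div_pos (Nat.le_of_dvd (Nat.pos_of_ne_zero hm0) hdm)
                (Nat.pos_of_ne_zero hd0)
              omega
            have hf2 : ¬ 2 ∣ (m / d) := by
              intro hdvd2
              have hee2 : 1 ≤ e.factorization 2 := by
                have h2e : 2 ∣ e := hee.two_dvd
                have := (Nat.Prime.pow_dvd_iff_le_factorization Nat.prime_two he0).mp
                  (by rwa [pow_one])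
                omega
              have hmd2 : 1 ≤ (m / d).factorization 2 := by
                have := (Nat.Prime.pow_dvd_iff_le_factorization Nat.prime_two hmd0).mp
                  (by rwa [pow_one])
                omega
              have hmdfac : (m / d).factorization 2
                  = m.factorization 2 - d.factorization 2 := by
                rw [Nat.factorization_div hdm, Finsupp.tsub_apply]
              have h2 := hdp 2
              have h3 := hep 2
              omega
            have hcop : Nat.Coprime (m / d) 2 :=
              Nat.coprime_comm.mp ((Nat.prime_two.coprime_iff_not_dvd).mpr hf2)
            have hmdg : (m / d) ∣ g := by
              have h2g : (m / d) ∣ g * 2 := by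
                rw [mul_comm, hg2m]
                exact Nat.div_dvd_of_dvd hdm
              exact Nat.Coprime.dvd_of_dvd_mul_right hcop h2g
            exact mem_zmult_of_dvd hmdg
        · right; exact hoe
      have hEvenq : Even ((2 * n) / e) := by
        have hassoc : 2 * n / e = 2 * (n / e) := Nat.mul_div_assoc 2 hen
        exact ⟨n / e, by omega⟩
      refine ⟨NN (AddSubgroup.zmultiples (((m / d : ℕ)) : ZMod m)) ((2 * n) / e) e hq hgood,
        NN_normal _ _ _ _ _ (Or.inl hEvenq), ?_⟩
      rw [card_NN, hXcard, hde]

end NNsec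

end KK

section Present

variable {m n g : ℕ} [NeZero m] [NeZero n] [Fact ((g : ZMod m) + g = 0)]

open KK

/-- the generator `a` of the presented group -/
def pa : PresentedGroup (Krels m n g) := PresentedGroup.of 0

/-- the generator `b` of the presented group -/
def pb : PresentedGroup (Krels m n g) := PresentedGroup.of 1

lemma mk_rel {r : FreeGroup (Fin 2)} (hr : r ∈ Krels m n g) :
    PresentedGroup.mk (Krels m n g) r = 1 :=
  (QuotientGroup.eq_one_iff r).mpr (Subgroup.subset_normalClosure hr)

lemma pa_m : (pa : PresentedGroup (Krels m n g)) ^ m = 1 := by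
  have h := mk_rel (m := m) (n := n) (g := g) (Set.mem_insert _ _)
  rw [map_pow] at h
  exact h

lemma pb_2n : (pb : PresentedGroup (Krels m n g)) ^ (2 * n) = pa ^ g := by
  have h := mk_rel (m := m) (n := n) (g := g)
    (Set.mem_insert_of_mem _ (Set.mem_insert _ _))
  rw [map_mul, map_inv, map_pow, map_pow] at h
  exact mul_inv_eq_one.mp h

lemma pconj : (pb : PresentedGroup (Krels m n g)) * pa * pb⁻¹ = pa⁻¹ := by
  have h := mk_rel (m := m) (n := n) (g := g)
    (Set.mem_insert_of_mem _ (Set.mem_insert_of_mem _ (Set.mem_singleton _)))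
  rw [map_mul, map_mul, map_mul, map_inv] at h
  exact mul_eq_one_iff_eq_inv.mp h

lemma aK_inv : (aK : KK m n g)⁻¹ = ⟨-1, 0⟩ := by
  rw [aK, inv_def]
  apply KK.ext
  · show -(eps m (-(0 : ZMod (2 * n))) * 1) - (g : ZMod m) * (chi (-(0 : ZMod (2 * n))) 0 : ℕ) = -1
    rw [neg_zero, eps_zero, chi_zero_left]
    push_cast; ring
  · show -(0 : ZMod (2 * n)) = 0
    rw [neg_zero]

lemma eps_one' : eps m (1 : ZMod (2 * n)) = -1 := by
  rw [eps, val_one', pow_one]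

lemma rel3K : (bK : KK m n g) * aK * bK⁻¹ * aK = 1 := by
  suffices h : (bK : KK m n g) * aK = aK⁻¹ * bK by
    rw [h]
    group
  rw [aK_inv]
  apply KK.ext
  · show 0 + eps m (1 : ZMod (2 * n)) * 1 + (g : ZMod m) * (chi (1 : ZMod (2 * n)) 0 : ℕ)
      = -1 + eps m (0 : ZMod (2 * n)) * 0 + (g : ZMod m) * (chi (0 : ZMod (2 * n)) 1 : ℕ)
    rw [eps_one', eps_zero, chi_zero_left, chi_zero_right]
    push_cast; ring
  · show (1 : ZMod (2 * n)) + 0 = 0 + 1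
    rw [zero_add, add_zero]

lemma hrelsK : ∀ r ∈ Krels m n g,
    FreeGroup.lift (![aK, bK] : Fin 2 → KK m n g) r = 1 := by
  intro r hr
  simp only [Krels, Set.mem_insert_iff, Set.mem_singleton_iff] at hr
  rcases hr with rfl | rfl | rfl
  · rw [map_pow, FreeGroup.lift_apply_of]
    show (aK : KK m n g) ^ m = 1
    rw [aK_pow, ZMod.natCast_self]
    rfl
  · rw [map_mul, map_inv, map_pow, map_pow, FreeGroup.lift_apply_of, FreeGroup.lift_apply_of]
    show (bK : KK m n g) ^ (2 * n) * ((aK : KK m n g) ^ g)⁻¹ = 1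
    rw [bK_pow_2n, aK_pow, mul_inv_cancel]
  · rw [map_mul, map_mul, map_mul, map_inv, FreeGroup.lift_apply_of, FreeGroup.lift_apply_of]
    show (bK : KK m n g) * aK * bK⁻¹ * aK = 1
    exact rel3K

/-- the homomorphism to the concrete model -/
def Phi : PresentedGroup (Krels m n g) →* KK m n g :=
  PresentedGroup.toGroup hrelsK

lemma Phi_a : Phi (pa : PresentedGroup (Krels m n g)) = aK := by
  rw [pa, Phi, PresentedGroup.toGroup.of]
  rfl

lemma Phi_b : Phi (pb : PresentedGroup (Krels m n g)) = bK := by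
  rw [pb, Phi, PresentedGroup.toGroup.of]
  rfl

lemma Phi_surj : Function.Surjective (Phi : PresentedGroup (Krels m n g) → KK m n g) := by
  intro p
  refine ⟨pa ^ p.x.val * pb ^ p.y.val, ?_⟩
  rw [map_mul, map_pow, map_pow, Phi_a, Phi_b, aK_pow, bK_pow _ (val2 p.y)]
  apply KK.ext
  · show ((p.x.val : ℕ) : ZMod m) + eps m (0 : ZMod (2 * n)) * 0
      + (g : ZMod m) * (chi (0 : ZMod (2 * n)) ((p.y.val : ℕ) : ZMod (2 * n)) : ℕ) = p.x
    rw [eps_zero, chi_zero_left]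
    have h1 : ((p.x.val : ℕ) : ZMod m) = p.x := ZMod.natCast_rightInverse p.x
    push_cast
    rw [mul_zero, add_zero, mul_zero, add_zero, h1]
  · show (0 : ZMod (2 * n)) + ((p.y.val : ℕ) : ZMod (2 * n)) = p.y
    rw [zero_add]
    exact ZMod.natCast_rightInverse p.y

lemma conj_zpow' {G : Type*} [Group G] (x a : G) (i : ℤ) :
    (x * a * x⁻¹) ^ i = x * a ^ i * x⁻¹ := by
  have h := map_zpow (MulAut.conj x) a i
  simpa [MulAut.conj_apply] using h.symm

lemma conj_aux (j : ℤ) :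
    (pb : PresentedGroup (Krels m n g)) ^ j * pa * (pb ^ j)⁻¹ = pa
      ∨ (pb : PresentedGroup (Krels m n g)) ^ j * pa * (pb ^ j)⁻¹ = pa⁻¹ := by
  induction j using Int.induction_on with
  | zero => left; simp
  | succ i ih =>
    have hstep : (pb : PresentedGroup (Krels m n g)) ^ ((i : ℤ) + 1) * pa * (pb ^ ((i : ℤ) + 1))⁻¹
        = pb * (pb ^ (i : ℤ) * pa * (pb ^ (i : ℤ))⁻¹) * pb⁻¹ := by
      rw [zpow_add_one]
      group
    rcases ih with h | h <;> rw [hstep, h]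
    · right; exact pconj
    · left
      rw [show (pb : PresentedGroup (Krels m n g)) * pa⁻¹ * pb⁻¹ = (pb * pa * pb⁻¹)⁻¹ by group,
        pconj, inv_inv]
  | pred i ih =>
    have hconj' : (pb : PresentedGroup (Krels m n g))⁻¹ * pa * pb = pa⁻¹ := by
      have h1 : (pb : PresentedGroup (Krels m n g))⁻¹ * pa⁻¹ * pb = pa := by
        rw [← pconj]; group
      have h2 := congrArg (fun z => z⁻¹) h1
      simpa [mul_inv_rev, mul_assoc] using h2
    have hstep : (pb : PresentedGroup (Krels m n g)) ^ (-(i : ℤ) - 1) * pa * (pb ^ (-(i : ℤ) - 1))⁻¹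
        = pb⁻¹ * (pb ^ (-(i : ℤ)) * pa * (pb ^ (-(i : ℤ)))⁻¹) * pb := by
      rw [zpow_sub, zpow_one]
      group
    rcases ih with h | h <;> rw [hstep, h]
    · right; exact hconj'
    · left
      rw [show (pb : PresentedGroup (Krels m n g))⁻¹ * pa⁻¹ * pb = (pb⁻¹ * pa * pb)⁻¹ by group,
        hconj', inv_inv]

lemma key2 (j i : ℤ) : ∃ i' : ℤ,
    (pb : PresentedGroup (Krels m n g)) ^ j * pa ^ i = pa ^ i' * pb ^ j := by
  rcases conj_aux (m := m) (n := n) (g := g) j with h | h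
  · refine ⟨i, ?_⟩
    have h2 : (pb : PresentedGroup (Krels m n g)) ^ j * pa ^ i * (pb ^ j)⁻¹ = pa ^ i := by
      rw [← conj_zpow', h]
    calc (pb : PresentedGroup (Krels m n g)) ^ j * pa ^ i
        = (pb ^ j * pa ^ i * (pb ^ j)⁻¹) * pb ^ j := by group
      _ = pa ^ i * pb ^ j := by rw [h2]
  · refine ⟨-i, ?_⟩
    have h2 : (pb : PresentedGroup (Krels m n g)) ^ j * pa ^ i * (pb ^ j)⁻¹ = pa ^ (-i) := by
      rw [← conj_zpow', h, inv_zpow, ← zpow_neg]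
    calc (pb : PresentedGroup (Krels m n g)) ^ j * pa ^ i
        = (pb ^ j * pa ^ i * (pb ^ j)⁻¹) * pb ^ j := by group
      _ = pa ^ (-i) * pb ^ j := by rw [h2]

/-- every element is `a^i b^j` -/
def TT : Subgroup (PresentedGroup (Krels m n g)) where
  carrier := {x | ∃ i j : ℤ, x = pa ^ i * pb ^ j}
  one_mem' := ⟨0, 0, by simp⟩
  mul_mem' := by
    rintro x y ⟨i, j, rfl⟩ ⟨i', j', rfl⟩
    obtain ⟨i'', h⟩ := key2 (m := m) (n := n) (g := g) j i'
    refine ⟨i + i'', j + j', ?_⟩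
    rw [zpow_add, zpow_add]
    calc pa ^ i * pb ^ j * (pa ^ i' * pb ^ j')
        = pa ^ i * (pb ^ j * pa ^ i') * pb ^ j' := by group
      _ = pa ^ i * (pa ^ i'' * pb ^ j) * pb ^ j' := by rw [h]
      _ = pa ^ i * pa ^ i'' * (pb ^ j * pb ^ j') := by group
  inv_mem' := by
    rintro x ⟨i, j, rfl⟩
    obtain ⟨i'', h⟩ := key2 (m := m) (n := n) (g := g) (-j) (-i)
    refine ⟨i'', -j, ?_⟩
    rw [mul_inv_rev, ← zpow_neg, ← zpow_neg, h]

lemma mem_TT_iff {x : PresentedGroup (Krels m n g)} :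
    x ∈ TT (m := m) (n := n) (g := g) ↔ ∃ i j : ℤ, x = pa ^ i * pb ^ j := Iff.rfl

lemma mem_TT (x : PresentedGroup (Krels m n g)) : x ∈ TT (m := m) (n := n) (g := g) := by
  have hcl := PresentedGroup.closure_range_of (Krels m n g)
  have hle : Subgroup.closure (Set.range (PresentedGroup.of : Fin 2 → _))
      ≤ TT (m := m) (n := n) (g := g) := by
    rw [Subgroup.closure_le]
    rintro y ⟨i, rfl⟩
    fin_cases i
    · exact mem_TT_iff.mpr ⟨1, 0, by rw [zpow_one, zpow_zero, mul_one]; rfl⟩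
    · exact mem_TT_iff.mpr ⟨0, 1, by rw [zpow_one, zpow_zero, one_mul]; rfl⟩
  rw [hcl] at hle
  exact hle (Subgroup.mem_top x)

lemma zpow_reduce {G : Type*} [Group G] (x : G) (M : ℕ) (hx : x ^ M = 1) (I : ℤ) :
    x ^ I = x ^ (I % (M : ℤ)) := by
  conv_lhs => rw [← Int.emod_add_mul_ediv I (M : ℤ)]
  rw [zpow_add, zpow_mul, zpow_natCast, hx, one_zpow, mul_one]

lemma P_surj : Function.Surjective
    (fun p : Fin m × Fin (2 * n) =>
      (pa : PresentedGroup (Krels m n g)) ^ (p.1 : ℕ) * pb ^ (p.2 : ℕ)) := by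
  intro x
  obtain ⟨i, j, rfl⟩ := mem_TT_iff.mp (mem_TT x)
  have hn0 := NeZero.ne n
  have hm0 := NeZero.ne m
  have h2npos : (0 : ℤ) < ((2 * n : ℕ) : ℤ) := by exact_mod_cast Nat.pos_of_ne_zero (by omega)
  have hmpos : (0 : ℤ) < ((m : ℕ) : ℤ) := by exact_mod_cast Nat.pos_of_ne_zero hm0
  set r := j % ((2 * n : ℕ) : ℤ) with hr
  set qq := j / ((2 * n : ℕ) : ℤ) with hqq
  have hsplit : (pb : PresentedGroup (Krels m n g)) ^ j = pb ^ r * pa ^ ((g : ℤ) * qq) := by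
    conv_lhs => rw [← Int.emod_add_mul_ediv j ((2 * n : ℕ) : ℤ)]
    rw [zpow_add, zpow_mul, zpow_natCast, pb_2n, ← zpow_natCast pa g, ← zpow_mul]
  obtain ⟨w, hw⟩ := key2 (m := m) (n := n) (g := g) r ((g : ℤ) * qq)
  have hx2 : (pa : PresentedGroup (Krels m n g)) ^ i * pb ^ j = pa ^ (i + w) * pb ^ r := by
    calc (pa : PresentedGroup (Krels m n g)) ^ i * pb ^ j
        = pa ^ i * (pb ^ r * pa ^ ((g : ℤ) * qq)) := by rw [hsplit]
      _ = pa ^ i * (pa ^ w * pb ^ r) := by rw [hw]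
      _ = pa ^ (i + w) * pb ^ r := by rw [zpow_add]; group
  set I := (i + w) % ((m : ℕ) : ℤ) with hI
  have hared : (pa : PresentedGroup (Krels m n g)) ^ (i + w) = pa ^ I :=
    zpow_reduce pa m pa_m _
  have hrnn : 0 ≤ r := Int.emod_nonneg j (by omega)
  have hrlt : r < ((2 * n : ℕ) : ℤ) := Int.emod_lt_of_pos j h2npos
  have hInn : 0 ≤ I := Int.emod_nonneg _ (by omega)
  have hIlt : I < ((m : ℕ) : ℤ) := Int.emod_lt_of_pos _ hmpos
  refine ⟨(⟨I.toNat, by omega⟩, ⟨r.toNat, by omega⟩), ?_⟩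
  show (pa : PresentedGroup (Krels m n g)) ^ (I.toNat : ℕ) * pb ^ (r.toNat : ℕ)
    = pa ^ i * pb ^ j
  rw [hx2, hared]
  have h5 : (pa : PresentedGroup (Krels m n g)) ^ (I.toNat : ℕ) = pa ^ I := by
    rw [← zpow_natCast, Int.toNat_of_nonneg hInn]
  have h6 : (pb : PresentedGroup (Krels m n g)) ^ (r.toNat : ℕ) = pb ^ r := by
    rw [← zpow_natCast, Int.toNat_of_nonneg hrnn]
  rw [h5, h6]

lemma Phi_bij : Function.Bijective (Phi : PresentedGroup (Krels m n g) → KK m n g) := by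
  have hfin : Finite (PresentedGroup (Krels m n g)) := Finite.of_surjective _ P_surj
  rw [Nat.bijective_iff_surjective_and_card]
  refine ⟨Phi_surj, ?_⟩
  have h1 : Nat.card (PresentedGroup (Krels m n g)) ≤ 2 * m * n := by
    have h := Nat.card_le_card_of_surjective _ (P_surj (m := m) (n := n) (g := g))
    calc Nat.card (PresentedGroup (Krels m n g)) ≤ Nat.card (Fin m × Fin (2 * n)) := h
      _ = 2 * m * n := by simp [Nat.card_prod, Nat.card_eq_fintype_card]; ring
  have h2 : Nat.card (KK m n g) ≤ Nat.card (PresentedGroup (Krels m n g)) :=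
    Nat.card_le_card_of_surjective _ Phi_surj
  have h3 := card_KK (m := m) (n := n) (g := g)
  omega

end Present

lemma exists_normal_card_map {G H : Type*} [Group G] [Group H] (e : G ≃* H) {k : ℕ}
    (h : ∃ N : Subgroup G, N.Normal ∧ Nat.card N = k) :
    ∃ N : Subgroup H, N.Normal ∧ Nat.card N = k := by
  obtain ⟨N, hN, hc⟩ := h
  refine ⟨N.map e.toMonoidHom, Subgroup.Normal.map hN e.toMonoidHom e.surjective, ?_⟩
  rw [← hc]
  exact (Nat.card_congr (Subgroup.equivMapOfInjective N e.toMonoidHom e.injective).toEquiv).symm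

end KAux

theorem stmt11 (m n g k : ℕ) (hm : 1 ≤ m) (hn : 1 ≤ n)
    (hgodd : Odd m → g = 0) (hg : g = 0 ∨ 2 * g = m)
    (hna : ¬ ∀ x y : PresentedGroup (Krels m n g), x * y = y * x)
    (hkpos : 0 < k) (hk : k ∣ 2 * m * n) :
    (∃ H : Subgroup (PresentedGroup (Krels m n g)), H.Normal ∧ Nat.card H = k) ↔
      m ∣ k ∨ padicValNat 2 k < padicValNat 2 (2 * m * n) := by
  haveI : NeZero m := ⟨by omega⟩
  haveI : NeZero n := ⟨by omega⟩
  haveI hfact : Fact ((g : ZMod m) + g = 0) := by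
    constructor
    rcases hg with hg0 | h2g
    · rw [hg0]; simp
    · have h1 : ((2 * g : ℕ) : ZMod m) = ((m : ℕ) : ZMod m) := by rw [h2g]
      rw [ZMod.natCast_self] at h1
      push_cast at h1
      linear_combination h1
  have e := MulEquiv.ofBijective _ (KAux.Phi_bij (m := m) (n := n) (g := g))
  constructor
  · intro h
    exact (KAux.KK.classify k hkpos hk hg).mp (KAux.exists_normal_card_map e h)
  · intro h
    exact KAux.exists_normal_card_map e.symm ((KAux.KK.classify k hkpos hk hg).mpr h)
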